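/- Let h ≥ 1 and d ≥ 1 be integers, let p_k denote the k-th prime, and let ν(k) denote the multiplicity of p_{h+1} in the positive integer k. For integers 1 ≤ m ≤ n and i ∈ {1,…,h}, define V_i(m,n) = {(p_i/p_{h+1})^(ν(k)) · k : k ∈ ℕ, m ≤ k ≤ n, ν(k) ≤ d} (a set of natural numbers) and its closure V̄_i(m,n) = {ℓ · p_{h+1}^(a₁+⋯+a_h) / (p₁^(a₁)⋯p_h^(a_h)) : ℓ ∈ V_i(m,n), a₁,…,a_h ∈ ℕ} ⊆ ℚ. Then there is a rational γ ∈ (1/2,1), depending only on h and d, and an N ∈ ℕ such that for every adaptive h-head finite-state gambler G over {0,1}, every input sequence Y ∈ {0,1}^ω, every integer n ≥ N, and every integer m with γ·n ≤ m ≤ n, there exists j ∈ {1,…,h} such that U(m,n) ∩ V̄_j(m,n) = ∅, where U(m,n) = [0,m−1] ∩ ⋃_{i=1}^{h−1} [π_i(m−1), π_i(m−1)+n−m+1] and π_i denotes the position of trailing head i of G on input Y. -/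

import Mathlib

/-!
Adaptive multi-head finite-state gamblers, their martingales and `s`-gales,
and the adaptive/oblivious multi-head finite-state (strong) predimensions.
-/

/-- An adaptive `h`-head finite-state gambler over the alphabet `A`.
Heads are indexed by `Fin h`; head `h-1` (the last one) is the leading head,
and heads `0, …, h-2` are the trailing heads (numbered `1, …, h-1` in the paper). -/
structure AFSG (A : Type) [Fintype A] (h : ℕ) where
  /-- the finite, nonempty state space -/
  Q : Type
  [fintypeQ : Fintype Q]
  [nonemptyQ : Nonempty Q]
  /-- the transition function -/
  δ : Q → (Fin h → A) → Q × (Fin (h - 1) → Bool)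
  /-- the betting function: a rational-valued probability distribution on `A`
  for each state -/
  β : Q → A → ℚ
  β_nonneg : ∀ q a, 0 ≤ β q a
  β_sum : ∀ q, ∑ a, β q a = 1
  /-- the initial state -/
  q₀ : Q
  /-- the initial capital -/
  c₀ : ℝ
  c₀_nonneg : 0 ≤ c₀

namespace AFSG

variable {A : Type} [Fintype A] {h : ℕ}

/-- One step of the gambler's run on input sequence `S`: from a configuration
(current state, head positions), all heads read their symbols, the state is
updated, the leading head moves right, and trailing head `i` moves right iff
bit `i` of the second component of `δ` is `1`. -/
def step (G : AFSG A h) (S : ℕ → A) (c : G.Q × (Fin h → ℕ)) : G.Q × (Fin h → ℕ) :=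
  let r := G.δ c.1 (fun i => S (c.2 i))
  (r.1, fun i =>
    if hi : (i : ℕ) < h - 1 then c.2 i + (if r.2 ⟨i, hi⟩ then 1 else 0)
    else c.2 i + 1)

/-- The configuration after `n` steps; all heads start at position `0`. -/
def conf (G : AFSG A h) (S : ℕ → A) (n : ℕ) : G.Q × (Fin h → ℕ) :=
  (G.step S)^[n] (G.q₀, fun _ => 0)

/-- The state `q_n` after `n` steps. -/
def stateAt (G : AFSG A h) (S : ℕ → A) (n : ℕ) : G.Q := (G.conf S n).1

/-- The position `π_i(n)` of head `i` after `n` steps. -/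
def headPos (G : AFSG A h) (S : ℕ → A) (i : Fin h) (n : ℕ) : ℕ := (G.conf S n).2 i

/-- The martingale of `G` evaluated on the prefix `S[0..n-1]`:
`d_G(λ) = c₀` and `d_G(wb) = |Σ| ⬝ d_G(w) ⬝ β(q_{|w|})(b)`. -/
def capital (G : AFSG A h) (S : ℕ → A) : ℕ → ℝ
  | 0 => G.c₀
  | n + 1 => (Fintype.card A : ℝ) * G.capital S n * (G.β (G.stateAt S n) (S n) : ℝ)

/-- The `s`-gale of `G` evaluated on the prefix `S[0..n-1]`:
`d_G^{(s)}(w) = |Σ|^{(s-1)|w|} ⬝ d_G(w)`. -/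
noncomputable def gale (G : AFSG A h) (s : ℝ) (S : ℕ → A) (n : ℕ) : ℝ :=
  (Fintype.card A : ℝ) ^ ((s - 1) * (n : ℝ)) * G.capital S n

/-- `G` is an oblivious `h`-head finite-state gambler: the state space factors
as `P × T`, the `T`-component evolves independently of the input, and the head
movements depend only on the `T`-component. -/
def Oblivious (G : AFSG A h) : Prop :=
  ∃ (P T : Type) (e : G.Q ≃ P × T) (δP : P → (Fin h → A) → P) (δT : T → T)
    (μ : T → Fin (h - 1) → Bool),
    ∀ q b, G.δ q b = (e.symm (δP (e q).1 b, δT (e q).2), μ (e q).2)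

end AFSG

/-- An `s`-gale (given by its values on the prefixes of a fixed sequence)
succeeds if its limsup is `∞`. -/
def SucceedsOn (f : ℕ → ℝ) : Prop :=
  Filter.limsup (fun n => (f n : EReal)) Filter.atTop = ⊤

/-- Strong success: the liminf is `∞`. -/
def SucceedsStronglyOn (f : ℕ → ℝ) : Prop :=
  Filter.liminf (fun n => (f n : EReal)) Filter.atTop = ⊤

/-- The adaptive `h`-head finite-state predimension `adim_FS^(h)(S)`. -/
noncomputable def adimFS (A : Type) [Fintype A] (h : ℕ) (S : ℕ → A) : ℝ :=
  sInf {s : ℝ | 0 ≤ s ∧ ∃ G : AFSG A h, SucceedsOn (G.gale s S)}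

/-- The adaptive `h`-head finite-state strong predimension `aDim_FS^(h)(S)`. -/
noncomputable def aDimFS (A : Type) [Fintype A] (h : ℕ) (S : ℕ → A) : ℝ :=
  sInf {s : ℝ | 0 ≤ s ∧ ∃ G : AFSG A h, SucceedsStronglyOn (G.gale s S)}

/-- The oblivious `h`-head finite-state predimension `odim_FS^(h)(S)`. -/
noncomputable def odimFS (A : Type) [Fintype A] (h : ℕ) (S : ℕ → A) : ℝ :=
  sInf {s : ℝ | 0 ≤ s ∧ ∃ G : AFSG A h, G.Oblivious ∧ SucceedsOn (G.gale s S)}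

/-- The oblivious `h`-head finite-state strong predimension `oDim_FS^(h)(S)`. -/
noncomputable def oDimFS (A : Type) [Fintype A] (h : ℕ) (S : ℕ → A) : ℝ :=
  sInf {s : ℝ | 0 ≤ s ∧ ∃ G : AFSG A h, G.Oblivious ∧ SucceedsStronglyOn (G.gale s S)}

/-- `nthPrime k` is the `k`-th prime number (1-indexed): `nthPrime 1 = 2`. -/
noncomputable def nthPrime (k : ℕ) : ℕ := Nat.nth Nat.Prime (k - 1)

/-- `ν(k)`: the multiplicity of `p_{h+1}` in `k`. -/
noncomputable def nuP (h k : ℕ) : ℕ := k.factorization (nthPrime (h + 1))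

/-- `V_i(m,n) = {(p_i/p_{h+1})^(ν k) · k : m ≤ k ≤ n, ν(k) ≤ d}` (a set of
natural numbers; since `p_{h+1}^(ν k)` divides `k`, the division is exact). -/
noncomputable def Vset (h d m n i : ℕ) : Set ℕ :=
  {v | ∃ k, m ≤ k ∧ k ≤ n ∧ nuP h k ≤ d ∧
    v = nthPrime i ^ nuP h k * (k / nthPrime (h + 1) ^ nuP h k)}

/-- The closure `V̄_i(m,n) ⊆ ℚ`:
`{ℓ · p_{h+1}^(a₁+⋯+a_h) / (p₁^(a₁)⋯p_h^(a_h)) : ℓ ∈ V_i(m,n), a ∈ ℕ^h}`. -/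
noncomputable def VbarSet (h d m n i : ℕ) : Set ℚ :=
  {x | ∃ ℓ ∈ Vset h d m n i, ∃ a : Fin h → ℕ,
    x = (ℓ : ℚ) * (nthPrime (h + 1) : ℚ) ^ (∑ j, a j) /
      ∏ j : Fin h, (nthPrime ((j : ℕ) + 1) : ℚ) ^ a j}

/-- `U(m,n) = [0,m−1] ∩ ⋃_{i=1}^{h−1} [π_i(m−1), π_i(m−1)+n−m+1]`, where `π_i`
is the position of trailing head `i` of the gambler `G` on input `Y`
(trailing heads are the heads of index `< h−1` in our indexing). -/
def Uset {h : ℕ} (G : AFSG (ZMod 2) h) (Y : ℕ → ZMod 2) (m n : ℕ) : Set ℕ :=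
  {u | u < m ∧ ∃ i : Fin (h - 1),
    G.headPos Y (Fin.castLE (Nat.sub_le h 1) i) (m - 1) ≤ u ∧
    u ≤ G.headPos Y (Fin.castLE (Nat.sub_le h 1) i) (m - 1) + (n - m + 1)}


/-! ### Auxiliary machinery for Statement 13 -/

section Stmt13Aux

lemma pow_aux1 (a n : ℕ) : a^n * (a+n) ≤ (a+1)^n * a := by
  induction n with
  | zero => simp
  | succ n ih =>
    have h1 : a^(n+1) ≤ (a+1)^n * a := by
      rw [pow_succ]
      exact Nat.mul_le_mul_right a (Nat.pow_le_pow_left (Nat.le_succ a) n)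
    calc a^(n+1) * (a+(n+1)) = a * (a^n * (a+n)) + a^(n+1) := by ring
      _ ≤ a * ((a+1)^n * a) + (a+1)^n * a := Nat.add_le_add (Nat.mul_le_mul_left a ih) h1
      _ = (a+1)^(n+1) * a := by ring

lemma pow_aux2 (q : ℕ) (hq : 2 ≤ q) : 2 * (q-1)^q ≤ q^q := by
  have h1 := pow_aux1 (q-1) q
  have hq1 : q - 1 + 1 = q := by omega
  rw [hq1] at h1
  have h2 : 2 * (q-1)^q * (q-1) ≤ q^q * (q-1) := by
    calc 2 * (q-1)^q * (q-1) = (q-1)^q * (2*(q-1)) := by ring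
      _ ≤ (q-1)^q * ((q-1) + q) := Nat.mul_le_mul_left _ (by omega)
      _ ≤ q^q * (q-1) := h1
  exact Nat.le_of_mul_le_mul_right h2 (by omega)

lemma pow_aux3 (q : ℕ) (hq : 2 ≤ q) : (q-1)^(q*q) * q ≤ q^(q*q) := by
  calc (q-1)^(q*q) * q = ((q-1)^q)^q * q := by rw [pow_mul]
    _ ≤ ((q-1)^q)^q * 2^q := Nat.mul_le_mul_left _ (Nat.lt_two_pow_self (n := q)).le
    _ = (2 * (q-1)^q)^q := by rw [mul_pow]; ring
    _ ≤ (q^q)^q := Nat.pow_le_pow_left (pow_aux2 q hq) q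
    _ = q^(q*q) := by rw [pow_mul]

lemma pow_aux4 (q d s : ℕ) (hq : 2 ≤ q) (hs : d * (q*q) ≤ s) :
    (q-1)^s * q^d ≤ q^s := by
  have h3 : ((q-1)^(q*q) * q)^d ≤ (q^(q*q))^d := Nat.pow_le_pow_left (pow_aux3 q hq) d
  have he : s - d*(q*q) + q*q*d = s := by rw [mul_comm (q*q) d]; omega
  calc (q-1)^s * q^d = (q-1)^(s - d*(q*q)) * ((q-1)^(q*q))^d * q^d := by
        rw [← pow_mul, ← pow_add, he]
    _ = (q-1)^(s - d*(q*q)) * ((q-1)^(q*q) * q)^d := by rw [mul_pow]; ring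
    _ ≤ q^(s - d*(q*q)) * (q^(q*q))^d :=
        Nat.mul_le_mul (Nat.pow_le_pow_left (by omega) _) h3
    _ = q^s := by rw [← pow_mul, ← pow_add, he]

/-- `p_{h+1}`, the modulus prime. -/
noncomputable def hdQ (h : ℕ) : ℕ := Nat.nth Nat.Prime h
/-- bound on the sum of closure exponents -/
noncomputable def hdB (h d : ℕ) : ℕ := d * (hdQ h * hdQ h)
/-- bound on the cross-multiplied comparison integers -/
noncomputable def hdM (h d : ℕ) : ℕ := hdQ h ^ (2*d + 2*hdB h d)
/-- the master constant -/
noncomputable def hdT (h d : ℕ) : ℕ := hdM h d * hdQ h ^ d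

lemma hdQ_prime (h : ℕ) : (hdQ h).Prime := Nat.prime_nth_prime h
lemma hdQ_two_le (h : ℕ) : 2 ≤ hdQ h := (hdQ_prime h).two_le
lemma nth_prime_lt_hdQ {h i : ℕ} (hi : i < h) : Nat.nth Nat.Prime i < hdQ h :=
  (Nat.nth_lt_nth Nat.infinite_setOf_prime).2 hi
lemma nth_prime_two_le (i : ℕ) : 2 ≤ Nat.nth Nat.Prime i := (Nat.prime_nth_prime i).two_le

lemma nthPrime_eq (i : ℕ) : nthPrime (i+1) = Nat.nth Nat.Prime i := by
  simp [nthPrime]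

lemma nthPrime_hQ (h : ℕ) : nthPrime (h+1) = hdQ h := nthPrime_eq h

lemma hdM_two_le (h d : ℕ) (hd : 1 ≤ d) : 2 ≤ hdM h d := by
  have h1 : 2 ≤ hdQ h := hdQ_two_le h
  have h2 : hdQ h ≤ hdQ h ^ (2*d + 2*hdB h d) := Nat.le_self_pow (by omega) _
  unfold hdM
  omega

lemma hdT_two_le (h d : ℕ) (hd : 1 ≤ d) : 2 ≤ hdT h d := by
  have h1 := hdM_two_le h d hd
  have h2 : 1 ≤ hdQ h ^ d := Nat.one_le_pow _ _ (by have := hdQ_two_le h; omega)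
  calc 2 ≤ hdM h d * 1 := by omega
    _ ≤ hdT h d := Nat.mul_le_mul_left _ h2

/-- Extraction of the natural-number equation from membership in `VbarSet`. -/
lemma mem_vbar_extract {h d m n j u : ℕ} (hu : (u:ℚ) ∈ VbarSet h d m n j) :
    ∃ (k : ℕ) (a : Fin h → ℕ), m ≤ k ∧ k ≤ n ∧ nuP h k ≤ d ∧
      u * (∏ i : Fin h, Nat.nth Nat.Prime (i:ℕ) ^ a i) * hdQ h ^ (nuP h k)
        = nthPrime j ^ (nuP h k) * k * hdQ h ^ (∑ i, a i) := by
  obtain ⟨ℓ, ⟨k, hk1, hk2, hν, hℓ⟩, a, hx⟩ := hu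
  refine ⟨k, a, hk1, hk2, hν, ?_⟩
  have hnu : nuP h k = k.factorization (hdQ h) := by rw [nuP, nthPrime_hQ]
  have hdvd : hdQ h ^ nuP h k ∣ k := by rw [hnu]; exact Nat.ordProj_dvd k _
  have hℓq : ℓ * hdQ h ^ nuP h k = nthPrime j ^ nuP h k * k := by
    rw [hℓ, nthPrime_hQ, mul_assoc, Nat.div_mul_cancel hdvd]
  have hD0 : (∏ i : Fin h, ((nthPrime ((i:ℕ)+1) : ℕ) : ℚ) ^ a i) ≠ 0 := by
    refine Finset.prod_ne_zero_iff.2 fun i _ => pow_ne_zero _ ?_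
    rw [nthPrime_eq]
    have := nth_prime_two_le (i:ℕ)
    positivity
  have h1 : (u:ℚ) * ∏ i : Fin h, ((nthPrime ((i:ℕ)+1) : ℕ) : ℚ) ^ a i
      = (ℓ:ℚ) * ((nthPrime (h+1) : ℕ) : ℚ) ^ (∑ i, a i) := by
    rw [hx, div_mul_cancel₀ _ hD0]
  simp only [nthPrime_eq, nthPrime_hQ] at h1
  have hc : (ℓ:ℚ) * ((hdQ h : ℕ):ℚ) ^ nuP h k = ((nthPrime j : ℕ):ℚ) ^ nuP h k * k := by
    exact_mod_cast hℓq
  have hgoal : ((u * (∏ i : Fin h, Nat.nth Nat.Prime (i:ℕ) ^ a i) * hdQ h ^ nuP h k : ℕ) : ℚ)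
      = ((nthPrime j ^ nuP h k * k * hdQ h ^ (∑ i, a i) : ℕ) : ℚ) := by
    push_cast
    simp only [hdQ] at hc ⊢
    linear_combination ((Nat.nth Nat.Prime h : ℕ):ℚ) ^ nuP h k * h1 +
      ((Nat.nth Nat.Prime h : ℕ):ℚ) ^ (∑ i, a i) * hc
  exact_mod_cast hgoal

/-- Bounds derived from the natural-number equation. -/
lemma vbar_bounds {h d m j u k : ℕ} (a : Fin h → ℕ)
    (hum : u < m) (hmk : m ≤ k) (hν : nuP h k ≤ d)
    (heq : u * (∏ i : Fin h, Nat.nth Nat.Prime (i:ℕ) ^ a i) * hdQ h ^ (nuP h k)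
       = nthPrime j ^ (nuP h k) * k * hdQ h ^ (∑ i, a i)) :
    (∑ i, a i) ≤ hdB h d ∧ m ≤ u * hdQ h ^ d := by
  set q := hdQ h with hqdef
  set s := ∑ i, a i with hsdef
  set ν := nuP h k with hνdef
  have hq2 : 2 ≤ q := hdQ_two_le h
  have hDle : (∏ i : Fin h, Nat.nth Nat.Prime (i:ℕ) ^ a i) ≤ (q-1)^s := by
    calc (∏ i : Fin h, Nat.nth Nat.Prime (i:ℕ) ^ a i)
        ≤ ∏ i : Fin h, (q-1) ^ a i := by
          refine Finset.prod_le_prod' fun i _ => Nat.pow_le_pow_left ?_ _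
          have := nth_prime_lt_hdQ i.2
          omega
      _ = (q-1)^s := Finset.prod_pow_eq_pow_sum _ _ _
  have hPk : m ≤ nthPrime j ^ ν * k :=
    le_trans hmk (Nat.le_mul_of_pos_left _ (Nat.pow_pos (by
      have : nthPrime j = Nat.nth Nat.Prime (j-1) := rfl
      have := nth_prime_two_le (j-1)
      omega)))
  have hmain : m * q^s ≤ u * ((q-1)^s * q^d) := by
    calc m * q^s ≤ (nthPrime j ^ ν * k) * q^s := Nat.mul_le_mul_right _ hPk
      _ = u * (∏ i : Fin h, Nat.nth Nat.Prime (i:ℕ) ^ a i) * q^ν := heq.symm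
      _ ≤ u * ((q-1)^s) * q^ν := Nat.mul_le_mul_right _ (Nat.mul_le_mul_left _ hDle)
      _ ≤ u * ((q-1)^s) * q^d := Nat.mul_le_mul_left _ (Nat.pow_le_pow_right (by omega) hν)
      _ = u * ((q-1)^s * q^d) := by ring
  constructor
  · by_contra hB
    push_neg at hB
    have hs4 : d * (q*q) ≤ s := by
      have : hdB h d = d * (q*q) := rfl
      omega
    have h4 := pow_aux4 q d s hq2 hs4
    have hle : m * q^s ≤ u * q^s := by
      refine le_trans hmain ?_
      calc u * ((q-1)^s * q^d) ≤ u * q^s := Nat.mul_le_mul_left _ h4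
        _ = u * q^s := rfl
    have hqs : 0 < q^s := Nat.pow_pos (by omega)
    have := Nat.le_of_mul_le_mul_right hle hqs
    omega
  · have h5 : u * ((q-1)^s * q^d) ≤ (u * q^d) * q^s := by
      calc u * ((q-1)^s * q^d) ≤ u * (q^s * q^d) :=
            Nat.mul_le_mul_left _ (Nat.mul_le_mul_right _ (Nat.pow_le_pow_left (by omega) _))
        _ = (u * q^d) * q^s := by ring
    have h6 : m * q^s ≤ (u * q^d) * q^s := le_trans hmain h5
    have hqs : 0 < q^s := Nat.pow_pos (by omega)
    exact Nat.le_of_mul_le_mul_right h6 hqs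

end Stmt13Aux


section Stmt13Main

lemma fac_apply_mul3 (p x y z : ℕ) (hx : x ≠ 0) (hy : y ≠ 0) (hz : z ≠ 0) :
    (x*y*z).factorization p
      = x.factorization p + y.factorization p + z.factorization p := by
  rw [Nat.factorization_mul (mul_ne_zero hx hy) hz, Nat.factorization_mul hx hy]
  simp

lemma factor_exp {h j1 j2 : ℕ} (ν1 ν2 c1 c2 : ℕ) (a1 a2 : Fin h → ℕ)
    (hj11 : 1 ≤ j1) (hj1h : j1 ≤ h) (hj21 : 1 ≤ j2) (hj2h : j2 ≤ h) (hne : j1 ≠ j2)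
    (hXY : Nat.nth Nat.Prime (j2-1) ^ ν2 * (Nat.nth Nat.Prime h) ^ c2 *
            (∏ i : Fin h, Nat.nth Nat.Prime (i:ℕ) ^ a1 i)
         = Nat.nth Nat.Prime (j1-1) ^ ν1 * (Nat.nth Nat.Prime h) ^ c1 *
            (∏ i : Fin h, Nat.nth Nat.Prime (i:ℕ) ^ a2 i)) :
    a1 ⟨j1-1, by omega⟩ = ν1 + a2 ⟨j1-1, by omega⟩ := by
  have hinj : Function.Injective (Nat.nth Nat.Prime) :=
    (Nat.nth_strictMono Nat.infinite_setOf_prime).injective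
  have hprime : ∀ i : ℕ, (Nat.nth Nat.Prime i).Prime := Nat.prime_nth_prime
  have hpow_ne : ∀ (i e : ℕ), Nat.nth Nat.Prime i ^ e ≠ 0 :=
    fun i e => pow_ne_zero _ (hprime i).pos.ne'
  have hprod_ne : ∀ (a : Fin h → ℕ), (∏ i : Fin h, Nat.nth Nat.Prime (i:ℕ) ^ a i) ≠ 0 :=
    fun a => Finset.prod_ne_zero_iff.2 fun i _ => hpow_ne _ _
  have hfac_pow : ∀ (i e : ℕ), ((Nat.nth Nat.Prime i) ^ e).factorization (Nat.nth Nat.Prime (j1-1))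
      = if i = j1 - 1 then e else 0 := by
    intro i e
    rw [(hprime i).factorization_pow, Finsupp.single_apply]
    congr 1
    simp only [eq_iff_iff]
    exact ⟨fun hh => hinj hh, fun hh => by rw [hh]⟩
  have hfac_prod : ∀ (a : Fin h → ℕ),
      (∏ i : Fin h, Nat.nth Nat.Prime (i:ℕ) ^ a i).factorization (Nat.nth Nat.Prime (j1-1))
        = a ⟨j1-1, by omega⟩ := by
    intro a
    rw [Nat.factorization_prod (fun i _ => hpow_ne _ _)]
    rw [Finsupp.finset_sum_apply]
    have heach : ∀ i : Fin h, ((Nat.nth Nat.Prime (i:ℕ)) ^ a i).factorization (Nat.nth Nat.Prime (j1-1))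
        = if i = (⟨j1-1, by omega⟩ : Fin h) then a i else 0 := by
      intro i
      rw [hfac_pow]
      congr 1
      simp only [eq_iff_iff]
      exact ⟨fun hh => Fin.ext hh, fun hh => by rw [hh]⟩
    simp_rw [heach]
    simp
  have hF : (Nat.nth Nat.Prime (j2-1) ^ ν2 * (Nat.nth Nat.Prime h) ^ c2 *
            (∏ i : Fin h, Nat.nth Nat.Prime (i:ℕ) ^ a1 i)).factorization (Nat.nth Nat.Prime (j1-1))
      = (Nat.nth Nat.Prime (j1-1) ^ ν1 * (Nat.nth Nat.Prime h) ^ c1 *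
            (∏ i : Fin h, Nat.nth Nat.Prime (i:ℕ) ^ a2 i)).factorization (Nat.nth Nat.Prime (j1-1)) := by
    rw [hXY]
  rw [fac_apply_mul3 _ _ _ _ (hpow_ne (j2-1) ν2) (hpow_ne h c2) (hprod_ne a1),
      fac_apply_mul3 _ _ _ _ (hpow_ne (j1-1) ν1) (hpow_ne h c1) (hprod_ne a2),
      hfac_prod a1, hfac_prod a2, hfac_pow (j2-1) ν2, hfac_pow h c2,
      hfac_pow (j1-1) ν1, hfac_pow h c1] at hF
  have h1 : ¬ (j2 - 1 = j1 - 1) := by omega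
  have h2 : ¬ (h = j1 - 1) := by omega
  rw [if_neg h1, if_neg h2, if_neg h2, if_pos rfl] at hF
  omega

set_option maxHeartbeats 1000000 in
lemma arith_aux (M Qd T X Y u1 u2 k1 k2 m n : ℕ)
    (hT : T = M * Qd) (hT2 : 2 ≤ T)
    (hX1 : 1 ≤ X) (hXM : X ≤ M)
    (hid : X * (u1 * k2) = Y * (u2 * k1))
    (hu2m : u2 < m)
    (hmu2 : m ≤ u2 * Qd)
    (hk1m : m ≤ k1) (hk2n : k2 ≤ n)
    (hd12 : u1 ≤ u2 + (n - m + 1))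
    (hN : 100 * T ≤ n) (hγ : (1 - 1/(100*(T:ℚ))) * n ≤ m) (hmn : m ≤ n) :
    ¬ X < Y := by
  intro hlt
  have hQd1 : 1 ≤ Qd := by
    rcases Nat.eq_zero_or_pos Qd with h | h
    · subst h; simp [Nat.mul_zero] at hT; omega
    · exact h
  have hM1 : 1 ≤ M := le_trans hX1 hXM
  have hidQ : (X:ℚ) * (u1 * k2) = Y * (u2 * k1) := by exact_mod_cast hid
  have hltQ : (X:ℚ) + 1 ≤ Y := by exact_mod_cast hlt
  have hXQ : (1:ℚ) ≤ X := by exact_mod_cast hX1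
  have hXMQ : (X:ℚ) ≤ M := by exact_mod_cast hXM
  have hd12Q : (u1:ℚ) ≤ u2 + ((n:ℚ) - m + 1) := by
    calc (u1:ℚ) ≤ ((u2 + (n - m + 1) : ℕ) : ℚ) := by exact_mod_cast hd12
      _ = u2 + ((n:ℚ) - m + 1) := by push_cast [Nat.cast_sub hmn]; ring
  have hnn : (0:ℚ) ≤ n := by positivity
  have hu20 : (0:ℚ) ≤ u2 := by positivity
  have hk10 : (0:ℚ) ≤ k1 := by positivity
  have hm0 : (0:ℚ) ≤ m := by positivity
  have hM0 : (0:ℚ) ≤ M := by positivity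
  have hQd0 : (0:ℚ) ≤ Qd := by positivity
  have hTQ2 : (2:ℚ) ≤ T := by exact_mod_cast hT2
  have hT0 : (0:ℚ) < 100 * T := by linarith
  have hNQ : 100 * (T:ℚ) ≤ n := by exact_mod_cast hN
  have hmnQ : (m:ℚ) ≤ n := by exact_mod_cast hmn
  have hu2mQ : (u2:ℚ) ≤ m := by exact_mod_cast hu2m.le
  have hmu2Q : (m:ℚ) ≤ u2 * Qd := by exact_mod_cast hmu2
  have hk1mQ : (m:ℚ) ≤ k1 := by exact_mod_cast hk1m
  have hk2nQ : (k2:ℚ) ≤ n := by exact_mod_cast hk2n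
  have hX0 : (0:ℚ) < X := by linarith
  have e : (X:ℚ) * ((u1:ℚ) * k2 - u2 * k1) = ((Y:ℚ) - X) * ((u2:ℚ) * k1) := by
    linear_combination hidQ
  have key1 : (u2:ℚ) * k1 ≤ (X:ℚ) * ((u1:ℚ) * k2 - u2 * k1) := by
    have h' : (0:ℚ) ≤ ((Y:ℚ) - X - 1) * ((u2:ℚ) * k1) :=
      mul_nonneg (by linarith) (mul_nonneg hu20 hk10)
    linarith [h', e]
  have hdiff0 : (0:ℚ) ≤ (u1:ℚ) * k2 - u2 * k1 := by
    rcases le_or_gt 0 ((u1:ℚ) * k2 - u2 * k1) with h | h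
    · exact h
    · exfalso
      have : (X:ℚ) * ((u1:ℚ) * k2 - u2 * k1) < 0 := mul_neg_of_pos_of_neg hX0 h
      linarith [mul_nonneg hu20 hk10]
  have key2 : (u2:ℚ) * k1 ≤ (M:ℚ) * ((u1:ℚ) * k2 - u2 * k1) :=
    key1.trans (mul_le_mul_of_nonneg_right hXMQ hdiff0)
  have key3 : (u1:ℚ) * k2 ≤ ((u2:ℚ) + ((n:ℚ) - m + 1)) * n := by
    refine mul_le_mul hd12Q hk2nQ (by positivity) ?_
    linarith
  have hu2k1 : (u2:ℚ) * m ≤ (u2:ℚ) * k1 := mul_le_mul_of_nonneg_left hk1mQ hu20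
  have hdle : (u1:ℚ) * k2 - u2 * k1 ≤ (u2:ℚ) * ((n:ℚ) - m) + ((n:ℚ) - m + 1) * n := by
    linarith [key3, hu2k1]
  have key4 : (u2:ℚ) * m ≤ (M:ℚ) * ((u2:ℚ) * ((n:ℚ) - m) + ((n:ℚ) - m + 1) * n) :=
    le_trans (hu2k1.trans key2) (mul_le_mul_of_nonneg_left hdle hM0)
  have hTQ : (T:ℚ) = M * Qd := by exact_mod_cast hT
  have key5 : (m:ℚ) * m ≤ (T:ℚ) * ((u2:ℚ) * ((n:ℚ) - m) + ((n:ℚ) - m + 1) * n) := by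
    have h1 : (m:ℚ) * m ≤ (u2 * Qd) * m := mul_le_mul_of_nonneg_right hmu2Q hm0
    have h2 : (Qd:ℚ) * ((u2:ℚ) * m) ≤ (Qd:ℚ) * ((M:ℚ) * ((u2:ℚ) * ((n:ℚ) - m) + ((n:ℚ) - m + 1) * n)) :=
      mul_le_mul_of_nonneg_left key4 hQd0
    calc (m:ℚ) * m ≤ (u2 * Qd) * m := h1
      _ = (Qd:ℚ) * ((u2:ℚ) * m) := by ring
      _ ≤ (Qd:ℚ) * ((M:ℚ) * ((u2:ℚ) * ((n:ℚ) - m) + ((n:ℚ) - m + 1) * n)) := h2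
      _ = (T:ℚ) * ((u2:ℚ) * ((n:ℚ) - m) + ((n:ℚ) - m + 1) * n) := by rw [hTQ]; ring
  have hS : 100 * (T:ℚ) * ((n:ℚ) - m) ≤ n := by
    have h2 : (100*(T:ℚ)) * ((1 - 1/(100*(T:ℚ))) * n) ≤ (100*(T:ℚ)) * m :=
      mul_le_mul_of_nonneg_left hγ (le_of_lt hT0)
    have hc : (100*(T:ℚ)) * (1/(100*(T:ℚ))) = 1 := mul_one_div_cancel hT0.ne'
    have h3 : (100*(T:ℚ)) * ((1 - 1/(100*(T:ℚ))) * n) = 100*(T:ℚ)*n - n := by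
      linear_combination (-(n:ℚ)) * hc
    linarith
  have hu2n : (u2:ℚ) ≤ n := le_trans hu2mQ hmnQ
  have hS0 : (0:ℚ) ≤ (n:ℚ) - m := by linarith
  have h200S : 200 * ((n:ℚ) - m) ≤ n := by
    have := mul_nonneg (by linarith : (0:ℚ) ≤ (T:ℚ) - 2) hS0
    linarith [this, hS]
  have h100m : 100 * ((m:ℚ) * m) ≤ 3 * ((n:ℚ) * n) := by
    linarith [key5, mul_le_mul_of_nonneg_right hS hu20,
      mul_le_mul_of_nonneg_left hu2n hnn,
      mul_le_mul_of_nonneg_right hS hnn, mul_le_mul_of_nonneg_right hNQ hnn]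
  have h200m : 199 * (n:ℚ) ≤ 200 * m := by linarith [h200S]
  have hn200 : (200:ℚ) ≤ n := by linarith
  linarith [mul_le_mul h200m h200m (by linarith) (by linarith : (0:ℚ) ≤ 200 * m),
    h100m, mul_le_mul_of_nonneg_right hn200 hnn]

set_option maxHeartbeats 2000000 in
/-- Two distinct branches cannot both be hit by nearby `u`'s below `m`. -/
lemma two_mem_false (h d : ℕ) (hd : 1 ≤ d) {j1 j2 u1 u2 m n : ℕ}
    (hj11 : 1 ≤ j1) (hj1h : j1 ≤ h) (hj21 : 1 ≤ j2) (hj2h : j2 ≤ h) (hne : j1 ≠ j2)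
    (hu1m : u1 < m) (hu2m : u2 < m)
    (hd12 : u1 ≤ u2 + (n - m + 1)) (hd21 : u2 ≤ u1 + (n - m + 1))
    (hN : 100 * hdT h d ≤ n) (hγ : (1 - 1/(100*(hdT h d : ℚ))) * n ≤ m) (hmn : m ≤ n)
    (hv1 : (u1:ℚ) ∈ VbarSet h d m n j1) (hv2 : (u2:ℚ) ∈ VbarSet h d m n j2) : False := by
  obtain ⟨k1, a1, hk1m, hk1n, hν1, heq1⟩ := mem_vbar_extract hv1
  obtain ⟨k2, a2, hk2m, hk2n, hν2, heq2⟩ := mem_vbar_extract hv2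
  obtain ⟨hA1, hmu1⟩ := vbar_bounds a1 hu1m hk1m hν1 heq1
  obtain ⟨hA2, hmu2⟩ := vbar_bounds a2 hu2m hk2m hν2 heq2
  have hq2 : 2 ≤ hdQ h := hdQ_two_le h
  have hnp1 : nthPrime j1 = Nat.nth Nat.Prime (j1-1) := rfl
  have hnp2 : nthPrime j2 = Nat.nth Nat.Prime (j2-1) := rfl
  rw [hnp1] at heq1
  rw [hnp2] at heq2
  have e1 := heq1
  have e2 := heq2
  set P1 := Nat.nth Nat.Prime (j1-1) with hP1def
  set P2 := Nat.nth Nat.Prime (j2-1) with hP2def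
  set q := hdQ h with hqdef
  set ν1 := nuP h k1 with hν1def
  set ν2 := nuP h k2 with hν2def
  set D1 := ∏ i : Fin h, Nat.nth Nat.Prime (i:ℕ) ^ a1 i with hD1def
  set D2 := ∏ i : Fin h, Nat.nth Nat.Prime (i:ℕ) ^ a2 i with hD2def
  set A1 := ∑ i, a1 i with hA1def
  set A2 := ∑ i, a2 i with hA2def
  set X := P2 ^ ν2 * q ^ (A2 + ν1) * D1 with hXdef
  set Y := P1 ^ ν1 * q ^ (A1 + ν2) * D2 with hYdef
  have hppos : ∀ i e : ℕ, 0 < Nat.nth Nat.Prime i ^ e :=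
    fun i e => Nat.pow_pos (Nat.prime_nth_prime i).pos
  have hqpos : ∀ e : ℕ, 0 < q ^ e := fun e => Nat.pow_pos (by omega)
  have hD1pos : 0 < D1 := Finset.prod_pos fun i _ => hppos _ _
  have hD2pos : 0 < D2 := Finset.prod_pos fun i _ => hppos _ _
  have hid : X * (u1 * k2) = Y * (u2 * k1) := by
    calc X * (u1 * k2) = (P2 ^ ν2 * q ^ A2 * k2) * (u1 * D1 * q ^ ν1) := by
          rw [hXdef]; ring
      _ = (P2 ^ ν2 * q ^ A2 * k2) * (P1 ^ ν1 * k1 * q ^ A1) := by rw [e1]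
      _ = (P1 ^ ν1 * q ^ A1 * k1) * (u2 * D2 * q ^ ν2) := by rw [e2]; ring
      _ = Y * (u2 * k1) := by rw [hYdef]; ring
  -- bounds on X and Y
  have hP1q : P1 ≤ q := le_of_lt (nth_prime_lt_hdQ (by omega))
  have hP2q : P2 ≤ q := le_of_lt (nth_prime_lt_hdQ (by omega))
  have hDle : ∀ (a : Fin h → ℕ), (∏ i : Fin h, Nat.nth Nat.Prime (i:ℕ) ^ a i) ≤ q ^ (∑ i, a i) := by
    intro a
    calc (∏ i : Fin h, Nat.nth Nat.Prime (i:ℕ) ^ a i)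
        ≤ ∏ i : Fin h, q ^ a i := by
          refine Finset.prod_le_prod' fun i _ => Nat.pow_le_pow_left ?_ _
          exact le_of_lt (nth_prime_lt_hdQ i.2)
      _ = q ^ (∑ i, a i) := Finset.prod_pow_eq_pow_sum _ _ _
  have hXM : X ≤ hdM h d := by
    calc X ≤ q ^ ν2 * q ^ (A2 + ν1) * q ^ A1 :=
          Nat.mul_le_mul (Nat.mul_le_mul (Nat.pow_le_pow_left hP2q _) le_rfl) (hDle a1)
      _ = q ^ (ν2 + (A2 + ν1) + A1) := by rw [← pow_add, ← pow_add]
      _ ≤ q ^ (2*d + 2*hdB h d) := Nat.pow_le_pow_right (by omega) (by omega)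
      _ = hdM h d := rfl
  have hYM : Y ≤ hdM h d := by
    calc Y ≤ q ^ ν1 * q ^ (A1 + ν2) * q ^ A2 :=
          Nat.mul_le_mul (Nat.mul_le_mul (Nat.pow_le_pow_left hP1q _) le_rfl) (hDle a2)
      _ = q ^ (ν1 + (A1 + ν2) + A2) := by rw [← pow_add, ← pow_add]
      _ ≤ q ^ (2*d + 2*hdB h d) := Nat.pow_le_pow_right (by omega) (by omega)
      _ = hdM h d := rfl
  have hX1 : 1 ≤ X := Nat.one_le_iff_ne_zero.2 (by
    have : 0 < X := Nat.mul_pos (Nat.mul_pos (hppos _ _) (hqpos _)) hD1pos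
    omega)
  have hY1 : 1 ≤ Y := Nat.one_le_iff_ne_zero.2 (by
    have : 0 < Y := Nat.mul_pos (Nat.mul_pos (hppos _ _) (hqpos _)) hD2pos
    omega)
  have hTdef : hdT h d = hdM h d * hdQ h ^ d := rfl
  have hT2 := hdT_two_le h d hd
  have hXY : X = Y := by
    have h1 := arith_aux (hdM h d) (hdQ h ^ d) (hdT h d) X Y u1 u2 k1 k2 m n hTdef hT2
      hX1 hXM hid hu2m hmu2 hk1m hk2n hd12 hN hγ hmn
    have h2 := arith_aux (hdM h d) (hdQ h ^ d) (hdT h d) Y X u2 u1 k2 k1 m n hTdef hT2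
      hY1 hYM hid.symm hu1m hmu1 hk2m hk1n hd21 hN hγ hmn
    omega
  -- unique factorization: the exponent of P1 in D1 is at least ν1
  have hfac : a1 ⟨j1-1, by omega⟩ = ν1 + a2 ⟨j1-1, by omega⟩ := by
    refine factor_exp ν1 ν2 (A1 + ν2) (A2 + ν1) a1 a2 hj11 hj1h hj21 hj2h hne ?_
    exact hXY
  set i0 : Fin h := ⟨j1-1, by omega⟩ with hi0def
  set s0 := a1 i0 with hs0def
  have hs0ν : ν1 ≤ s0 := by omega
  have hs0A : s0 ≤ A1 :=
    Finset.single_le_sum (f := a1) (fun i _ => Nat.zero_le _) (Finset.mem_univ i0)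
  have hsplit : D1 = P1 ^ s0 * ∏ i ∈ Finset.univ.erase i0, Nat.nth Nat.Prime (i:ℕ) ^ a1 i := by
    rw [hD1def, ← Finset.mul_prod_erase Finset.univ _ (Finset.mem_univ i0)]
  have hsum_erase : ∑ i ∈ Finset.univ.erase i0, a1 i = A1 - s0 := by
    have := Finset.add_sum_erase Finset.univ a1 (Finset.mem_univ i0)
    omega
  have h_erase_le : (∏ i ∈ Finset.univ.erase i0, Nat.nth Nat.Prime (i:ℕ) ^ a1 i) ≤ q ^ (A1 - s0) := by
    calc (∏ i ∈ Finset.univ.erase i0, Nat.nth Nat.Prime (i:ℕ) ^ a1 i)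
        ≤ ∏ i ∈ Finset.univ.erase i0, q ^ a1 i := by
          refine Finset.prod_le_prod' fun i _ => Nat.pow_le_pow_left ?_ _
          exact le_of_lt (nth_prime_lt_hdQ i.2)
      _ = q ^ (∑ i ∈ Finset.univ.erase i0, a1 i) := Finset.prod_pow_eq_pow_sum _ _ _
      _ = q ^ (A1 - s0) := by rw [hsum_erase]
  have hs0eq : ν1 + (s0 - ν1) = s0 := by omega
  have hDq : D1 * q ^ ν1 ≤ P1 ^ ν1 * q ^ A1 := by
    calc D1 * q ^ ν1
        = (P1 ^ ν1 * P1 ^ (s0 - ν1)) * ((∏ i ∈ Finset.univ.erase i0,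
            Nat.nth Nat.Prime (i:ℕ) ^ a1 i) * q ^ ν1) := by
          rw [hsplit, ← pow_add, hs0eq]; ring
      _ ≤ (P1 ^ ν1 * q ^ (s0 - ν1)) * (q ^ (A1 - s0) * q ^ ν1) :=
          Nat.mul_le_mul (Nat.mul_le_mul_left _ (Nat.pow_le_pow_left hP1q _))
            (Nat.mul_le_mul_right _ h_erase_le)
      _ = P1 ^ ν1 * q ^ (s0 - ν1 + (A1 - s0) + ν1) := by
          rw [pow_add, pow_add]; ring
      _ = P1 ^ ν1 * q ^ A1 := by
          rw [show s0 - ν1 + (A1 - s0) + ν1 = A1 from by omega]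
  have h7 : (P1 ^ ν1 * q ^ A1) * k1 ≤ (P1 ^ ν1 * q ^ A1) * u1 := by
    calc (P1 ^ ν1 * q ^ A1) * k1 = P1 ^ ν1 * k1 * q ^ A1 := by ring
      _ = u1 * D1 * q ^ ν1 := e1.symm
      _ = u1 * (D1 * q ^ ν1) := by ring
      _ ≤ u1 * (P1 ^ ν1 * q ^ A1) := Nat.mul_le_mul_left _ hDq
      _ = (P1 ^ ν1 * q ^ A1) * u1 := by
          ring
  have hk1u1 : k1 ≤ u1 :=
    Nat.le_of_mul_le_mul_left h7 (Nat.mul_pos (hppos _ _) (hqpos _))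
  omega

end Stmt13Main

/-- For `h ≥ 1` and `d ≥ 1` there are a rational
`γ ∈ (1/2, 1)` and an `N ∈ ℕ`, depending only on `h` and `d`, such that for
every adaptive `h`-head finite-state gambler `G` over `{0,1}`, every input
`Y ∈ {0,1}^ω`, every `n ≥ N`, and every `m` with `γ·n ≤ m ≤ n`, there is some
`j ∈ {1,…,h}` with `U(m,n) ∩ V̄_j(m,n) = ∅`. -/
theorem exists_unvisited_branch (h d : ℕ) (hh : 1 ≤ h) (hd : 1 ≤ d) :
    ∃ γ : ℚ, 1 / 2 < γ ∧ γ < 1 ∧ ∃ N : ℕ,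
      ∀ (G : AFSG (ZMod 2) h) (Y : ℕ → ZMod 2) (n m : ℕ),
        N ≤ n → γ * (n : ℚ) ≤ (m : ℚ) → m ≤ n →
        ∃ j, 1 ≤ j ∧ j ≤ h ∧
          ∀ u ∈ Uset G Y m n, ((u : ℚ) ∉ VbarSet h d m n j) := by
  refine ⟨1 - 1/(100*(hdT h d : ℚ)), ?_, ?_, 100 * hdT h d, ?_⟩
  · have hT2 : (2:ℚ) ≤ (hdT h d : ℚ) := by exact_mod_cast hdT_two_le h d hd
    have h1 : 1/(100*(hdT h d:ℚ)) ≤ 1/200 :=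
      one_div_le_one_div_of_le (by norm_num) (by linarith)
    linarith
  · have hT2 : (2:ℚ) ≤ (hdT h d : ℚ) := by exact_mod_cast hdT_two_le h d hd
    have h0 : (0:ℚ) < 100*(hdT h d:ℚ) := by linarith
    have := one_div_pos.2 h0
    linarith
  · intro G Y n m hN hγm hmn
    by_contra hcon
    push_neg at hcon
    have hsel : ∀ j : Fin h, ∃ (u : ℕ) (i : Fin (h-1)),
        u < m ∧
        G.headPos Y (Fin.castLE (Nat.sub_le h 1) i) (m-1) ≤ u ∧
        u ≤ G.headPos Y (Fin.castLE (Nat.sub_le h 1) i) (m-1) + (n-m+1) ∧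
        (u:ℚ) ∈ VbarSet h d m n ((j:ℕ)+1) := by
      intro j
      obtain ⟨u, hu, hv⟩ := hcon ((j:ℕ)+1) (by omega) (by have := j.isLt; omega)
      obtain ⟨hum, i, hi1, hi2⟩ := hu
      exact ⟨u, i, hum, hi1, hi2, hv⟩
    choose uf idx hum hlo hhi hv using hsel
    obtain ⟨j, j', hjj, hidx⟩ := Fintype.exists_ne_map_eq_of_card_lt idx
      (by simp only [Fintype.card_fin]; omega)
    have hle1 : uf j ≤ uf j' + (n - m + 1) := by
      have h1 := hhi j
      have h2 := hlo j'
      rw [hidx] at h1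
      omega
    have hle2 : uf j' ≤ uf j + (n - m + 1) := by
      have h1 := hhi j'
      have h2 := hlo j
      rw [hidx] at h2
      omega
    exact two_mem_false h d hd (j1 := (j:ℕ)+1) (j2 := (j':ℕ)+1)
      (by omega) (by have := j.isLt; omega)
      (by omega) (by have := j'.isLt; omega)
      (fun hc => hjj (Fin.ext (by omega)))
      (hum j) (hum j') hle1 hle2 hN hγm hmn (hv j) (hv j')
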